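/- Let p be an odd prime. For all nonnegative integers n, the polycotangent number T_{2n}^{(-p+1)} ≡ 1 (mod p) if 2n = 0 or (p-1) does not divide 2n, and T_{2n}^{(-p+1)} ≡ 2 (mod p) if 2n ≠ 0 and (p-1) divides 2n. -/

import Mathlib

/-- Stirling numbers of the second kind, defined by the recursion
`S(0,0)=1`, `S(n,0)=S(0,m)=0` for `n,m ≥ 1`, `S(n+1,m+1)=S(n,m)+(m+1)*S(n,m+1)`. -/
def stirling2 : ℕ → ℕ → ℕ
  | 0, 0 => 1
  | 0, _ + 1 => 0
  | _ + 1, 0 => 0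
  | n + 1, m + 1 => stirling2 n m + (m + 1) * stirling2 n (m + 1)
/-- The polycosecant numbers with nonpositive upper index:
`Dneg n k = D_{2n}^{(-k)} = ∑_{i=1}^{min(2n+1,k)} (i!(i-1)!/2^{i-1}) S(k,i) S(2n+1,i)`. -/
def Dneg (n k : ℕ) : ℚ :=
  ∑ i ∈ Finset.Icc 1 (min (2 * n + 1) k),
    (Nat.factorial i * Nat.factorial (i - 1) : ℚ) / 2 ^ (i - 1) *
      (stirling2 k i : ℚ) * (stirling2 (2 * n + 1) i : ℚ)
/-- The polycotangent numbers with nonpositive upper index: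
`Tneg n k = T_{2n}^{(-k)} = ∑_{i=0}^{n} binom(2n,2i) D_{2i}^{(-k)}`. -/
def Tneg (n k : ℕ) : ℚ :=
  ∑ i ∈ Finset.range (n + 1), (Nat.choose (2 * n) (2 * i) : ℚ) * Dneg i k

open Finset


open Finset

lemma stirling2_eq_zero : ∀ {N l : ℕ}, N < l → stirling2 N l = 0 := by
  intro N
  induction N with
  | zero => intro l h; cases l with
    | zero => omega
    | succ m => rfl
  | succ n ih =>
    intro l h
    cases l with
    | zero => omega
    | succ m =>
      show stirling2 n m + (m+1) * stirling2 n (m+1) = 0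
      rw [ih (by omega), ih (by omega)]
      simp

lemma stirling2_sum : ∀ (k l : ℕ),
    (l.factorial * stirling2 k l : ℤ) =
      ∑ j ∈ range (l+1), (-1)^(l+j) * (l.choose j) * (j:ℤ)^k := by
  intro k
  induction k with
  | zero =>
    intro l
    have : ∀ j ∈ range (l+1), (-1:ℤ)^(l+j) * (l.choose j) * (j:ℤ)^0
        = (-1)^l * ((-1)^j * (l.choose j)) := by
      intro j hj; rw [pow_add]; ring
    rw [Finset.sum_congr rfl this, ← Finset.mul_sum, Int.alternating_sum_range_choose]
    cases l with
    | zero => simp [stirling2]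
    | succ m =>
      rw [stirling2_eq_zero (by omega)]
      simp
  | succ k ih =>
    intro l
    cases l with
    | zero => simp [stirling2]
    | succ m =>
      -- key: ∑_{t=0}^{m} (-1)^(m+t) C(m,t) (t+1)^k = R k m + R k (m+1)
      have key : ∑ t ∈ range (m+1), (-1:ℤ)^(m+t) * (m.choose t) * ((t:ℤ)+1)^k
          = (m.factorial * stirling2 k m : ℤ) + ((m+1).factorial * stirling2 k (m+1) : ℤ) := by
        rw [ih m, ih (m+1)]
        -- expand R k (m+1) via Pascal
        have pascal : ∑ j ∈ range (m+2), (-1:ℤ)^(m+1+j) * ((m+1).choose j) * (j:ℤ)^k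
            = (∑ j ∈ range (m+2), (-1:ℤ)^(m+1+j) * (m.choose j) * (j:ℤ)^k)
              + ∑ j ∈ range (m+2), (-1:ℤ)^(m+1+j) * (if j = 0 then 0 else (m.choose (j-1))) * (j:ℤ)^k := by
          rw [← Finset.sum_add_distrib]
          apply Finset.sum_congr rfl
          intro j hj
          cases j with
          | zero => simp
          | succ i =>
            have : (m+1).choose (i+1) = m.choose i + m.choose (i+1) := Nat.choose_succ_succ' m i
            rw [this]
            simp only [Nat.add_eq, if_neg (Nat.succ_ne_zero i), Nat.succ_sub_one]
            push_cast
            ring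
        have sum1 : ∑ j ∈ range (m+2), (-1:ℤ)^(m+1+j) * (m.choose j) * (j:ℤ)^k
            = -∑ j ∈ range (m+1), (-1:ℤ)^(m+j) * (m.choose j) * (j:ℤ)^k := by
          rw [Finset.sum_range_succ, Nat.choose_succ_self]
          rw [← Finset.sum_neg_distrib]
          simp only [Nat.cast_zero, mul_zero, zero_mul, add_zero]
          apply Finset.sum_congr rfl
          intro j hj
          have : (-1:ℤ)^(m+1+j) = -(-1:ℤ)^(m+j) := by
            rw [show m+1+j = (m+j)+1 by ring, pow_succ]; ring
          rw [this]; ring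
        have sum2 : ∑ j ∈ range (m+2), (-1:ℤ)^(m+1+j) * (((if j = 0 then 0 else m.choose (j-1)) : ℕ) : ℤ) * (j:ℤ)^k
            = ∑ t ∈ range (m+1), (-1:ℤ)^(m+t) * (m.choose t) * ((t:ℤ)+1)^k := by
          rw [Finset.sum_range_succ']
          simp only [if_neg (Nat.succ_ne_zero _), Nat.succ_sub_one, if_true, reduceIte,
            Nat.cast_zero, mul_zero, zero_mul, add_zero]
          apply Finset.sum_congr rfl
          intro t ht
          have : (-1:ℤ)^(m+1+(t+1)) = (-1:ℤ)^(m+t) := by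
            rw [show m+1+(t+1) = (m+t)+2 by ring, pow_add]; ring
          rw [this]
          push_cast
          ring
        rw [pascal, sum1, sum2]
        ring
      -- now the main goal
      have lhs : ((m+1).factorial * stirling2 (k+1) (m+1) : ℤ)
          = (m+1) * ((m.factorial * stirling2 k m : ℤ) + ((m+1).factorial * stirling2 k (m+1) : ℤ)) := by
        show ((m+1).factorial * (stirling2 k m + (m + 1) * stirling2 k (m+1)) : ℤ) = _
        rw [Nat.factorial_succ]
        push_cast
        ring
      rw [lhs, ← key]
      conv_rhs => rw [Finset.sum_range_succ']
      simp only [Nat.cast_zero, zero_pow (Nat.succ_ne_zero k), mul_zero, add_zero]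
      rw [Finset.mul_sum]
      apply Finset.sum_congr rfl
      intro t ht
      have hch : ((m+1) * m.choose t : ℤ) = ((m+1).choose (t+1)) * (t+1) := by
        exact_mod_cast congrArg (Nat.cast : ℕ → ℤ) (Nat.add_one_mul_choose_eq m t)
      have : (-1:ℤ)^(m+1+(t+1)) = (-1:ℤ)^(m+t) := by
        rw [show m+1+(t+1) = (m+t)+2 by ring, pow_add]; ring
      rw [this]
      push_cast at hch ⊢
      calc (↑m + 1) * ((-1:ℤ) ^ (m + t) * ↑(m.choose t) * (↑t + 1) ^ k)
          = (-1:ℤ)^(m+t) * ((↑m+1) * ↑(m.choose t)) * (↑t+1)^k := by ring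
        _ = (-1:ℤ)^(m+t) * (↑((m+1).choose (t+1)) * (↑t+1)) * (↑t+1)^k := by rw [hch]
        _ = (-1) ^ (m + t) * ↑((m + 1).choose (t + 1)) * (↑t + 1) ^ (k+1) := by ring

lemma two_pow_dvd : ∀ l : ℕ, 2^(l-1) ∣ l.factorial * (l-1).factorial := by
  intro l
  induction l with
  | zero => simp
  | succ l ih =>
    cases l with
    | zero => simp [Nat.factorial]
    | succ m =>
      -- goal : 2^(m+1) ∣ (m+2)! * (m+1)!
      have h1 : (m+2).factorial * (m+1).factorial
          = ((m+1).factorial * m.factorial) * ((m+2)*(m+1)) := by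
        rw [Nat.factorial_succ (m+1), Nat.factorial_succ m]
        ring
      have h2 : 2 ∣ (m+2)*(m+1) := by
        have : Even ((m+1)*(m+2)) := Nat.even_mul_succ_self (m+1)
        rw [mul_comm]
        exact this.two_dvd
      have := Nat.mul_dvd_mul ih h2
      simpa [h1, pow_succ, Nat.succ_sub_one] using this

lemma choose_partial_sum (r : ℕ) : ∀ M, r ≤ M →
    (∑ s ∈ Icc r M, ((s.choose r : ℤ)) * 2^(M-s)) + ∑ t ∈ range (r+1), ((M+1).choose t : ℤ)
      = 2^(M+1) := by
  intro M
  induction M with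
  | zero =>
    intro h
    interval_cases r
    simp
  | succ M ih =>
    intro hr
    rcases Nat.lt_or_ge r (M+1) with hlt | hge
    · have hrM : r ≤ M := by omega
      have h1 : ∑ s ∈ Icc r (M+1), ((s.choose r : ℤ)) * 2^(M+1-s)
          = 2 * (∑ s ∈ Icc r M, ((s.choose r : ℤ)) * 2^(M-s)) + ((M+1).choose r : ℤ) := by
        rw [Finset.sum_Icc_succ_top (by omega : r ≤ M+1)]
        simp only [Nat.sub_self, pow_zero, mul_one]
        congr 1
        rw [Finset.mul_sum]
        apply Finset.sum_congr rfl
        intro s hs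
        have hsM : s ≤ M := (Finset.mem_Icc.mp hs).2
        have : M+1-s = (M-s)+1 := by omega
        rw [this, pow_succ]
        ring
      have h2 : ∑ t ∈ range (r+1), ((M+2).choose t : ℤ)
          = 2 * (∑ t ∈ range (r+1), ((M+1).choose t : ℤ)) - ((M+1).choose r : ℤ) := by
        rw [Finset.sum_range_succ']
        have split : ∑ t ∈ range r, ((M+2).choose (t+1) : ℤ)
            = ∑ t ∈ range r, ((M+1).choose t : ℤ) + ∑ t ∈ range r, ((M+1).choose (t+1) : ℤ) := by
          rw [← Finset.sum_add_distrib]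
          apply Finset.sum_congr rfl
          intro t ht
          have := Nat.choose_succ_succ' (M+1) t
          exact_mod_cast congrArg (Nat.cast : ℕ → ℤ) this
        have e1 := Finset.sum_range_succ (fun t => ((M+1).choose t : ℤ)) r
        have e2 := Finset.sum_range_succ' (fun t => ((M+1).choose t : ℤ)) r
        simp only [Nat.choose_zero_right, Nat.cast_one] at *
        rw [split]
        linarith
      have hM2 : (2:ℤ)^(M+2) = 2 * 2^(M+1) := by ring
      have := ih hrM
      rw [show M+1+1 = M+2 by rfl] at h2 ⊢
      rw [h1, h2, hM2]
      linarith
    · have hreq : r = M+1 := by omega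
      subst hreq
      rw [Finset.Icc_self, Finset.sum_singleton, Nat.choose_self, Nat.sub_self]
      have := Nat.sum_range_choose (M+2)
      have hcast : ∑ t ∈ range (M+3), ((M+2).choose t : ℤ) = 2^(M+2) := by
        exact_mod_cast congrArg (Nat.cast : ℕ → ℤ) this
      rw [Finset.sum_range_succ, Nat.choose_self] at hcast
      simp only [Nat.cast_one, pow_zero, mul_one]
      rw [show M+1+1 = M+2 by rfl]
      push_cast at hcast ⊢
      linarith

section zmodstuff
variable (p : ℕ) [Fact p.Prime]

lemma choose_neg_one : ∀ t : ℕ, t ≤ p - 1 → (((p-1).choose t : ℕ) : ZMod p) = (-1)^t := by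
  have hp : p.Prime := Fact.out
  intro t
  induction t with
  | zero => simp
  | succ t ih =>
    intro ht
    have htp : t ≤ p - 1 := by omega
    have key := Nat.choose_succ_right_eq (p-1) t
    have hcast : (((p-1).choose (t+1) : ℕ) : ZMod p) * ((t+1 : ℕ) : ZMod p)
        = (((p-1).choose t : ℕ) : ZMod p) * (((p-1-t : ℕ) : ℕ) : ZMod p) := by
      exact_mod_cast congrArg (Nat.cast : ℕ → ZMod p) key
    have hneg : (((p-1-t : ℕ) : ℕ) : ZMod p) = -((t+1 : ℕ) : ZMod p) := by
      have hsum : ((p-1-t) + (t+1) : ℕ) = p := by omega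
      have : (((p-1-t) + (t+1) : ℕ) : ZMod p) = 0 := by rw [hsum]; exact ZMod.natCast_self p
      push_cast at this ⊢
      linear_combination this
    have hne : ((t+1 : ℕ) : ZMod p) ≠ 0 := by
      intro h0
      rw [ZMod.natCast_eq_zero_iff] at h0
      have hdvd := h0
      have := Nat.le_of_dvd (by omega) hdvd
      have := hp.two_le
      omega
    apply mul_right_cancel₀ hne
    rw [hcast, hneg, ih htp]
    rw [pow_succ]
    ring

lemma sum_Icc_cast {M : Type*} [AddCommMonoid M] (g : ZMod p → M) :
    ∑ j ∈ Icc 1 (p-1), g ((j : ℕ) : ZMod p) = ∑ x ∈ (univ : Finset (ZMod p)) \ {0}, g x := by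
  have hp : p.Prime := Fact.out
  haveI : NeZero p := ⟨hp.ne_zero⟩
  apply Finset.sum_nbij' (i := fun j => ((j : ℕ) : ZMod p)) (j := fun x => x.val)
  · intro a ha
    simp only [Finset.mem_sdiff, Finset.mem_univ, Finset.mem_singleton, true_and]
    rw [Finset.mem_Icc] at ha
    intro h0
    rw [ZMod.natCast_eq_zero_iff] at h0
    have hdvd := h0
    have := Nat.le_of_dvd (by omega) hdvd
    have := hp.two_le
    omega
  · intro x hx
    simp only [Finset.mem_sdiff, Finset.mem_univ, Finset.mem_singleton, true_and] at hx
    rw [Finset.mem_Icc]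
    have h1 : x.val < p := ZMod.val_lt x
    have h2 : x.val ≠ 0 := by
      rw [Ne, ZMod.val_eq_zero]; exact hx
    omega
  · intro a ha
    rw [Finset.mem_Icc] at ha
    exact ZMod.val_cast_of_lt (by have := Fact.out (p := p.Prime) |>.two_le; omega)
  · intro x hx
    exact ZMod.natCast_rightInverse x
  · intro a ha
    rfl

lemma sum_erase_pow (m : ℕ) :
    ∑ x ∈ (univ : Finset (ZMod p)) \ {0}, x^m = if (p-1) ∣ m then -1 else 0 := by
  have hp : p.Prime := Fact.out
  haveI : NeZero p := ⟨hp.ne_zero⟩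
  classical
  let φ : (ZMod p)ˣ ↪ ZMod p := ⟨fun x => x, fun _ _ h => Units.ext h⟩
  have hmap : Finset.univ.map φ = (univ : Finset (ZMod p)) \ {0} := by
    ext x
    simp only [Finset.mem_map, Finset.mem_univ, Function.Embedding.coeFn_mk, true_and,
      Finset.mem_sdiff, Finset.mem_singleton, φ]
    exact isUnit_iff_ne_zero
  rw [← hmap, Finset.sum_map]
  have := FiniteField.sum_pow_units (ZMod p) m
  rw [ZMod.card p] at this
  exact this

lemma sum_Icc_pow (m : ℕ) :
    ∑ j ∈ Icc 1 (p-1), ((j : ℕ) : ZMod p)^m = if (p-1) ∣ m then -1 else 0 := by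
  rw [sum_Icc_cast p (fun x => x^m)]
  exact sum_erase_pow p m

lemma sum_univ_pow (m : ℕ) (hm : m ≠ 0) :
    ∑ x : ZMod p, x^m = if (p-1) ∣ m then -1 else 0 := by
  have hp : p.Prime := Fact.out
  haveI : NeZero p := ⟨hp.ne_zero⟩
  classical
  have h0 : (0 : ZMod p) ∈ (univ : Finset (ZMod p)) := Finset.mem_univ 0
  rw [Finset.sum_eq_sum_sdiff_singleton_add h0, zero_pow hm, add_zero]
  exact sum_erase_pow p m

end zmodstuff

def eD (l : ℕ) : ℕ := (l.factorial * (l-1).factorial) / 2^(l-1)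

def DnegNat (n k : ℕ) : ℕ :=
  ∑ l ∈ Icc 1 (min (2*n+1) k), eD l * stirling2 k l * stirling2 (2*n+1) l

def TnegNat (n k : ℕ) : ℕ :=
  ∑ i ∈ range (n+1), (2*n).choose (2*i) * DnegNat i k

lemma eD_cast (l : ℕ) : (eD l : ℚ) = (l.factorial * (l-1).factorial : ℚ) / 2^(l-1) := by
  rw [eD, Nat.cast_div (two_pow_dvd l) (by positivity)]
  push_cast
  ring

lemma Dneg_eq_cast (n k : ℕ) : Dneg n k = (DnegNat n k : ℚ) := by
  rw [Dneg, DnegNat]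
  push_cast
  apply Finset.sum_congr rfl
  intro l hl
  rw [eD_cast]

lemma Tneg_eq_cast (n k : ℕ) : Tneg n k = (TnegNat n k : ℚ) := by
  rw [Tneg, TnegNat]
  push_cast
  apply Finset.sum_congr rfl
  intro i hi
  rw [Dneg_eq_cast]

section modp
variable (p : ℕ) [Fact p.Prime]

lemma stirling_fermat {l : ℕ} (h1 : 1 ≤ l) (h2 : l ≤ p - 1) :
    ((l.factorial * stirling2 (p-1) l : ℕ) : ZMod p) = (-1)^(l+1) := by
  have hp : p.Prime := Fact.out
  have hZ := stirling2_sum (p-1) l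
  have hF : ((l.factorial * stirling2 (p-1) l : ℕ) : ZMod p)
      = ∑ j ∈ range (l+1), (-1 : ZMod p)^(l+j) * (l.choose j) * ((j : ℕ) : ZMod p)^(p-1) := by
    have := congrArg (Int.cast : ℤ → ZMod p) hZ
    push_cast at this ⊢
    exact this
  rw [hF, Finset.sum_range_succ']
  have hzero : ((0 : ℕ) : ZMod p)^(p-1) = 0 := by
    rw [Nat.cast_zero]
    exact zero_pow (by have := hp.two_le; omega)
  rw [hzero]
  simp only [mul_zero, add_zero]
  have hone : ∀ j ∈ range l, (-1 : ZMod p)^(l+(j+1)) * (l.choose (j+1)) * ((j+1 : ℕ) : ZMod p)^(p-1)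
      = (-1 : ZMod p)^(l+(j+1)) * (l.choose (j+1)) := by
    intro j hj
    have hjl := Finset.mem_range.mp hj
    have hp2 := hp.two_le
    have hne : ((j+1 : ℕ) : ZMod p) ≠ 0 := by
      intro h0
      rw [ZMod.natCast_eq_zero_iff] at h0
      have := Nat.le_of_dvd (by omega) h0
      omega
    rw [ZMod.pow_card_sub_one_eq_one hne, mul_one]
  rw [Finset.sum_congr rfl hone]
  -- now: ∑_{j∈range l} (-1)^(l+j+1) C(l,j+1) = (-1)^(l+1)
  have halt : ∑ j ∈ range (l+1), (-1 : ZMod p)^(l+j) * (l.choose j) = 0 := by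
    have hZalt := Int.alternating_sum_range_choose (n := l)
    rw [if_neg (by omega)] at hZalt
    have : ∑ j ∈ range (l+1), (-1 : ZMod p)^(l+j) * (l.choose j)
        = (-1 : ZMod p)^l * ∑ j ∈ range (l+1), (-1 : ZMod p)^j * (l.choose j) := by
      rw [Finset.mul_sum]
      apply Finset.sum_congr rfl
      intro j hj
      rw [pow_add]
      ring
    rw [this]
    have hcast : ∑ j ∈ range (l+1), (-1 : ZMod p)^j * (l.choose j) = 0 := by
      have := congrArg (Int.cast : ℤ → ZMod p) hZalt
      push_cast at this
      convert this using 2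
    rw [hcast, mul_zero]
  rw [Finset.sum_range_succ'] at halt
  simp only [Nat.choose_zero_right, Nat.cast_one, mul_one, add_zero] at halt
  have : ∑ j ∈ range l, (-1 : ZMod p)^(l+(j+1)) * (l.choose (j+1)) = -(-1 : ZMod p)^l := by
    linear_combination halt
  rw [this, pow_succ]
  ring

end modp

section modp2
variable (p : ℕ) [Fact p.Prime]

lemma two_ne_zero_zmod (hodd : Odd p) : (2 : ZMod p) ≠ 0 := by
  have hp : p.Prime := Fact.out
  intro h0
  have : ((2 : ℕ) : ZMod p) = 0 := by exact_mod_cast h0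
  rw [ZMod.natCast_eq_zero_iff] at this
  have := (Nat.prime_dvd_prime_iff_eq hp Nat.prime_two).mp this
  rcases hodd with ⟨k, hk⟩
  omega

lemma A_lemma (hodd : Odd p) (r : ℕ) (hr : r ≤ p - 2) :
    ∑ s ∈ Icc r (p-2), ((2 : ZMod p)^s)⁻¹ * ((s.choose r : ℕ) : ZMod p)
      = if Even r then 0 else 2 := by
  have hp : p.Prime := Fact.out
  have hp2 := hp.two_le
  have hp3 : 3 ≤ p := by rcases hodd with ⟨k, hk⟩; omega
  have h2 : (2 : ZMod p) ≠ 0 := two_ne_zero_zmod p hodd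
  have hZ := choose_partial_sum r (p-2) hr
  have hcast : (∑ s ∈ Icc r (p-2), ((s.choose r : ℕ) : ZMod p) * (2 : ZMod p)^(p-2-s))
      + (∑ t ∈ range (r+1), (((p-2+1).choose t : ℕ) : ZMod p)) = (2 : ZMod p)^(p-2+1) := by
    have := congrArg (Int.cast : ℤ → ZMod p) hZ
    push_cast at this
    exact this
  rw [(by omega : p-2+1 = p-1)] at hcast
  rw [ZMod.pow_card_sub_one_eq_one h2] at hcast
  have hsum2 : ∑ t ∈ range (r+1), (((p-1).choose t : ℕ) : ZMod p)
      = if Even (r+1) then 0 else 1 := by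
    rw [← neg_one_geom_sum]
    apply Finset.sum_congr rfl
    intro t ht
    have := Finset.mem_range.mp ht
    exact choose_neg_one p t (by omega)
  rw [hsum2] at hcast
  have hsum1 : ∑ s ∈ Icc r (p-2), ((s.choose r : ℕ) : ZMod p) * (2 : ZMod p)^(p-2-s)
      = (2 : ZMod p)^(p-2) * ∑ s ∈ Icc r (p-2), ((2 : ZMod p)^s)⁻¹ * ((s.choose r : ℕ) : ZMod p) := by
    rw [Finset.mul_sum]
    apply Finset.sum_congr rfl
    intro s hs
    have hsle := (Finset.mem_Icc.mp hs).2
    have hpow : (2 : ZMod p)^(p-2-s) * (2 : ZMod p)^s = (2 : ZMod p)^(p-2) := by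
      rw [← pow_add, (by omega : p-2-s+s = p-2)]
    have hsne : (2 : ZMod p)^s ≠ 0 := pow_ne_zero _ h2
    field_simp
    linear_combination ((s.choose r : ℕ) : ZMod p) * hpow
  rw [hsum1] at hcast
  have hkey : (2 : ZMod p)^(p-2) * 2 = 1 := by
    rw [← pow_succ, (by omega : p-2+1 = p-1)]
    exact ZMod.pow_card_sub_one_eq_one h2
  apply mul_left_cancel₀ (pow_ne_zero (p-2) h2)
  rcases Nat.even_or_odd r with he | ho
  · rw [if_pos he]
    rw [if_neg (by simp [Nat.even_add_one, he])] at hcast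
    linear_combination hcast
  · rw [if_neg (Nat.not_even_iff_odd.mpr ho)]
    rw [if_pos (Odd.add_one ho)] at hcast
    linear_combination hcast - hkey

end modp2

section modp3
variable (p : ℕ) [Fact p.Prime]

lemma per_l (hodd : Odd p) (n : ℕ) {l : ℕ} (h1 : 1 ≤ l) (h2 : l ≤ p - 1) :
    (eD l : ZMod p) * (stirling2 (p-1) l : ZMod p) * (stirling2 (2*n+1) l : ZMod p)
      = ∑ j ∈ Icc 1 l, (-(-1 : ZMod p)^j) * ((2 : ZMod p)^(l-1))⁻¹
          * (((l-1).choose (j-1) : ℕ) : ZMod p) * ((j : ℕ) : ZMod p)^(2*n) := by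
  have hp : p.Prime := Fact.out
  have hp2 := hp.two_le
  have h2z : (2 : ZMod p) ≠ 0 := two_ne_zero_zmod p hodd
  have h2pow : (2 : ZMod p)^(l-1) ≠ 0 := pow_ne_zero _ h2z
  have hlfac : ((l.factorial : ℕ) : ZMod p) ≠ 0 := by
    intro h0
    rw [ZMod.natCast_eq_zero_iff] at h0
    rw [hp.dvd_factorial] at h0
    omega
  have heD : (eD l : ZMod p) * (2 : ZMod p)^(l-1)
      = ((l.factorial : ℕ) : ZMod p) * (((l-1).factorial : ℕ) : ZMod p) := by
    have := Nat.div_mul_cancel (two_pow_dvd l)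
    have hc := congrArg (Nat.cast : ℕ → ZMod p) this
    push_cast at hc
    exact_mod_cast hc
  have hSP : ((l.factorial : ℕ) : ZMod p) * (stirling2 (p-1) l : ZMod p) = (-1)^(l+1) := by
    have := stirling_fermat p h1 h2
    push_cast at this
    exact this
  have hSN : ((l.factorial : ℕ) : ZMod p) * (stirling2 (2*n+1) l : ZMod p)
      = ∑ j ∈ range (l+1), (-1 : ZMod p)^(l+j) * (l.choose j) * ((j : ℕ) : ZMod p)^(2*n+1) := by
    have := congrArg (Int.cast : ℤ → ZMod p) (stirling2_sum (2*n+1) l)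
    push_cast at this
    exact this
  set K : ZMod p := ((l.factorial : ℕ) : ZMod p) * ((l.factorial : ℕ) : ZMod p)
      * (2 : ZMod p)^(l-1) with hK
  have hKne : K ≠ 0 := mul_ne_zero (mul_ne_zero hlfac hlfac) h2pow
  apply mul_left_cancel₀ hKne
  have hlhs : K * ((eD l : ZMod p) * (stirling2 (p-1) l : ZMod p) * (stirling2 (2*n+1) l : ZMod p))
      = ∑ j ∈ range (l+1), (((l.factorial : ℕ) : ZMod p) * (((l-1).factorial : ℕ) : ZMod p))
          * ((-1 : ZMod p)^(l+1)) * ((-1 : ZMod p)^(l+j) * (l.choose j) * ((j : ℕ) : ZMod p)^(2*n+1)) := by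
    calc K * ((eD l : ZMod p) * (stirling2 (p-1) l : ZMod p) * (stirling2 (2*n+1) l : ZMod p))
        = ((eD l : ZMod p) * (2 : ZMod p)^(l-1))
          * (((l.factorial : ℕ) : ZMod p) * (stirling2 (p-1) l : ZMod p))
          * (((l.factorial : ℕ) : ZMod p) * (stirling2 (2*n+1) l : ZMod p)) := by rw [hK]; ring
      _ = ((l.factorial : ℕ) : ZMod p) * (((l-1).factorial : ℕ) : ZMod p) * (-1)^(l+1)
          * ∑ j ∈ range (l+1), (-1 : ZMod p)^(l+j) * (l.choose j) * ((j : ℕ) : ZMod p)^(2*n+1) := by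
        rw [heD, hSP, hSN]
      _ = _ := by rw [Finset.mul_sum]
  have hsub : Icc 1 l ⊆ range (l+1) := by
    intro x hx; rw [Finset.mem_Icc] at hx; exact Finset.mem_range.mpr (by omega)
  have hzero : ∀ x ∈ range (l+1), x ∉ Icc 1 l →
      ((l.factorial : ℕ) : ZMod p) * (((l-1).factorial : ℕ) : ZMod p) * (-1 : ZMod p)^(l+1)
        * ((-1 : ZMod p)^(l+x) * (l.choose x) * ((x : ℕ) : ZMod p)^(2*n+1)) = 0 := by
    intro x hx hnx
    rw [Finset.mem_range] at hx
    rw [Finset.mem_Icc] at hnx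
    have hx0 : x = 0 := by omega
    subst hx0
    rw [Nat.cast_zero, zero_pow (by omega : 2*n+1 ≠ 0)]
    ring
  rw [hlhs, ← Finset.sum_subset hsub hzero]
  rw [Finset.mul_sum]
  apply Finset.sum_congr rfl
  intro j hj
  rw [Finset.mem_Icc] at hj
  -- termwise identity
  have hsign : (-1 : ZMod p)^(l+1) * (-1 : ZMod p)^(l+j) = -(-1 : ZMod p)^j := by
    have : (-1 : ZMod p)^(l+1) * (-1 : ZMod p)^(l+j)
        = ((-1 : ZMod p)^l * (-1 : ZMod p)^l) * ((-1)^1 * (-1)^j) := by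
      rw [pow_add, pow_add]; ring
    rw [this, ← pow_add, ← two_mul, pow_mul, neg_one_sq, one_pow]
    ring
  have hnj : l * (l-1).choose (j-1) = l.choose j * j := by
    have := Nat.add_one_mul_choose_eq (l-1) (j-1)
    rwa [(by omega : l-1+1 = l), (by omega : j-1+1 = j)] at this
  have hnjF : (l : ZMod p) * (((l-1).choose (j-1) : ℕ) : ZMod p)
      = ((l.choose j : ℕ) : ZMod p) * ((j : ℕ) : ZMod p) := by
    exact_mod_cast congrArg (Nat.cast : ℕ → ZMod p) hnj
  have hfac : ((l.factorial : ℕ) : ZMod p) = (l : ZMod p) * (((l-1).factorial : ℕ) : ZMod p) := by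
    have : l.factorial = l * (l-1).factorial := by
      conv_lhs => rw [(by omega : l = l-1+1)]
      rw [Nat.factorial_succ, (by omega : l-1+1 = l)]
    exact_mod_cast congrArg (Nat.cast : ℕ → ZMod p) this
  have hpow : ((j : ℕ) : ZMod p)^(2*n+1) = ((j : ℕ) : ZMod p)^(2*n) * ((j : ℕ) : ZMod p) :=
    pow_succ _ _
  have hinv : (2 : ZMod p)^(l-1) * ((2 : ZMod p)^(l-1))⁻¹ = 1 := mul_inv_cancel₀ h2pow
  -- goal:  l! * (l-1)! * (-1)^(l+1) * ((-1)^(l+j) * C(l,j) * j^(2n+1))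
  --      = K * ( -(-1)^j * (2^(l-1))⁻¹ * C(l-1,j-1) * j^(2n) )
  calc ((l.factorial : ℕ) : ZMod p) * (((l-1).factorial : ℕ) : ZMod p) * (-1 : ZMod p)^(l+1)
        * ((-1 : ZMod p)^(l+j) * (l.choose j) * ((j : ℕ) : ZMod p)^(2*n+1))
      = ((l.factorial : ℕ) : ZMod p) * (((l-1).factorial : ℕ) : ZMod p) * (-(-1 : ZMod p)^j)
        * ((l.choose j : ℕ) : ZMod p) * (((j : ℕ) : ZMod p)^(2*n) * ((j : ℕ) : ZMod p)) := by
        rw [hpow]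
        linear_combination (((l.factorial : ℕ) : ZMod p) * (((l-1).factorial : ℕ) : ZMod p)
          * ((l.choose j : ℕ) : ZMod p) * (((j : ℕ) : ZMod p)^(2*n) * ((j : ℕ) : ZMod p))) * hsign
    _ = ((l.factorial : ℕ) : ZMod p) * (((l-1).factorial : ℕ) : ZMod p) * (-(-1 : ZMod p)^j)
        * (((l.choose j : ℕ) : ZMod p) * ((j : ℕ) : ZMod p)) * ((j : ℕ) : ZMod p)^(2*n) := by ring
    _ = ((l.factorial : ℕ) : ZMod p) * (((l-1).factorial : ℕ) : ZMod p) * (-(-1 : ZMod p)^j)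
        * ((l : ZMod p) * (((l-1).choose (j-1) : ℕ) : ZMod p)) * ((j : ℕ) : ZMod p)^(2*n) := by
        rw [hnjF]
    _ = ((l.factorial : ℕ) : ZMod p) * ((l : ZMod p) * (((l-1).factorial : ℕ) : ZMod p))
        * (-(-1 : ZMod p)^j) * (((l-1).choose (j-1) : ℕ) : ZMod p) * ((j : ℕ) : ZMod p)^(2*n) := by
        ring
    _ = ((l.factorial : ℕ) : ZMod p) * ((l.factorial : ℕ) : ZMod p)
        * (-(-1 : ZMod p)^j) * (((l-1).choose (j-1) : ℕ) : ZMod p) * ((j : ℕ) : ZMod p)^(2*n) := by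
        rw [← hfac]
    _ = K * ((-(-1 : ZMod p)^j) * ((2 : ZMod p)^(l-1))⁻¹
        * (((l-1).choose (j-1) : ℕ) : ZMod p) * ((j : ℕ) : ZMod p)^(2*n)) := by
        rw [hK]
        field_simp

end modp3

section modp4
variable (p : ℕ) [Fact p.Prime]

lemma Dneg_mod (hodd : Odd p) (n : ℕ) :
    ((DnegNat n (p-1) : ℕ) : ZMod p) = if (p-1) ∣ 2*n then 1 else 0 := by
  have hp : p.Prime := Fact.out
  have hp2 := hp.two_le
  have hp3 : 3 ≤ p := by rcases hodd with ⟨k, hk⟩; omega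
  have h2z : (2 : ZMod p) ≠ 0 := two_ne_zero_zmod p hodd
  -- cast the sum
  have hc : ((DnegNat n (p-1) : ℕ) : ZMod p)
      = ∑ l ∈ Icc 1 (min (2*n+1) (p-1)),
          (eD l : ZMod p) * (stirling2 (p-1) l : ZMod p) * (stirling2 (2*n+1) l : ZMod p) := by
    rw [DnegNat]
    push_cast
    rfl
  -- extend to Icc 1 (p-1)
  have hsub : Icc 1 (min (2*n+1) (p-1)) ⊆ Icc 1 (p-1) := by
    apply Finset.Icc_subset_Icc_right
    exact min_le_right _ _
  have hzero : ∀ l ∈ Icc 1 (p-1), l ∉ Icc 1 (min (2*n+1) (p-1)) →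
      (eD l : ZMod p) * (stirling2 (p-1) l : ZMod p) * (stirling2 (2*n+1) l : ZMod p) = 0 := by
    intro l hl hnl
    rw [Finset.mem_Icc] at hl hnl
    have : 2*n+1 < l := by omega
    rw [stirling2_eq_zero this]
    simp
  rw [hc, Finset.sum_subset hsub hzero]
  -- per-term rewrite
  have hper : ∑ l ∈ Icc 1 (p-1),
      (eD l : ZMod p) * (stirling2 (p-1) l : ZMod p) * (stirling2 (2*n+1) l : ZMod p)
      = ∑ l ∈ Icc 1 (p-1), ∑ j ∈ Icc 1 l, (-(-1 : ZMod p)^j) * ((2 : ZMod p)^(l-1))⁻¹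
          * (((l-1).choose (j-1) : ℕ) : ZMod p) * ((j : ℕ) : ZMod p)^(2*n) := by
    apply Finset.sum_congr rfl
    intro l hl
    rw [Finset.mem_Icc] at hl
    exact per_l p hodd n hl.1 hl.2
  rw [hper]
  -- swap the double sum
  have hcomm : ∑ l ∈ Icc 1 (p-1), ∑ j ∈ Icc 1 l, (-(-1 : ZMod p)^j) * ((2 : ZMod p)^(l-1))⁻¹
          * (((l-1).choose (j-1) : ℕ) : ZMod p) * ((j : ℕ) : ZMod p)^(2*n)
      = ∑ j ∈ Icc 1 (p-1), ∑ l ∈ Icc j (p-1), (-(-1 : ZMod p)^j) * ((2 : ZMod p)^(l-1))⁻¹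
          * (((l-1).choose (j-1) : ℕ) : ZMod p) * ((j : ℕ) : ZMod p)^(2*n) := by
    apply Finset.sum_comm'
    intro x y
    rw [Finset.mem_Icc, Finset.mem_Icc, Finset.mem_Icc, Finset.mem_Icc]
    omega
  rw [hcomm]
  -- inner sum evaluation
  have hinner : ∀ j ∈ Icc 1 (p-1),
      ∑ l ∈ Icc j (p-1), (-(-1 : ZMod p)^j) * ((2 : ZMod p)^(l-1))⁻¹
          * (((l-1).choose (j-1) : ℕ) : ZMod p) * ((j : ℕ) : ZMod p)^(2*n)
      = (-(-1 : ZMod p)^j) * ((j : ℕ) : ZMod p)^(2*n)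
          * (if Even (j-1) then 0 else 2) := by
    intro j hj
    rw [Finset.mem_Icc] at hj
    have hA := A_lemma p hodd (j-1) (by omega)
    rw [← hA, Finset.mul_sum]
    apply Finset.sum_nbij' (i := fun l => l - 1) (j := fun s => s + 1)
    · intro a ha; rw [Finset.mem_Icc] at ha ⊢; omega
    · intro a ha; rw [Finset.mem_Icc] at ha ⊢; omega
    · intro a ha; rw [Finset.mem_Icc] at ha; omega
    · intro a ha; omega
    · intro a ha
      rw [Finset.mem_Icc] at ha
      ring
  rw [Finset.sum_congr rfl hinner]
  -- simplify per-term to even/odd form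
  have hform : ∀ j ∈ Icc 1 (p-1),
      (-(-1 : ZMod p)^j) * ((j : ℕ) : ZMod p)^(2*n) * (if Even (j-1) then 0 else 2)
      = (if Even j then (-2) * ((j : ℕ) : ZMod p)^(2*n) else 0) := by
    intro j hj
    rw [Finset.mem_Icc] at hj
    rcases Nat.even_or_odd j with he | ho
    · have h1 : ¬ Even (j-1) := by
        rw [Nat.even_iff] at he ⊢
        omega
      rw [if_neg h1, if_pos he, he.neg_one_pow]
      ring
    · have h1 : Even (j-1) := by
        rw [Nat.odd_iff] at ho
        rw [Nat.even_iff]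
        omega
      rw [if_pos h1, if_neg (Nat.not_even_iff_odd.mpr ho)]
      ring
  rw [Finset.sum_congr rfl hform]
  -- pairing j ↦ p - j
  have hpair : ∑ j ∈ Icc 1 (p-1),
      (if Even (p-j) then (-2 : ZMod p) * (((p-j : ℕ)) : ZMod p)^(2*n) else 0)
      = ∑ j ∈ Icc 1 (p-1), (if Even j then (-2 : ZMod p) * ((j : ℕ) : ZMod p)^(2*n) else 0) := by
    apply Finset.sum_nbij' (i := fun j => p - j) (j := fun j => p - j)
    · intro a ha; simp only [Finset.mem_Icc] at ha ⊢; omega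
    · intro a ha; simp only [Finset.mem_Icc] at ha ⊢; omega
    · intro a ha; simp only [Finset.mem_Icc] at ha; omega
    · intro a ha; simp only [Finset.mem_Icc] at ha; omega
    · intro a ha; rfl
  have hodd_form : ∀ j ∈ Icc 1 (p-1),
      (if Even (p-j) then (-2 : ZMod p) * (((p-j : ℕ)) : ZMod p)^(2*n) else 0)
      = (if Even j then 0 else (-2 : ZMod p) * ((j : ℕ) : ZMod p)^(2*n)) := by
    intro j hj
    rw [Finset.mem_Icc] at hj
    have hcast : (((p-j : ℕ)) : ZMod p) = -((j : ℕ) : ZMod p) := by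
      have hpj : ((p-j) + j : ℕ) = p := by omega
      have h0 : (((p-j) + j : ℕ) : ZMod p) = 0 := by rw [hpj]; exact ZMod.natCast_self p
      push_cast at h0
      linear_combination h0
    have hpar : Even (p-j) ↔ ¬ Even j := by
      rw [Nat.even_iff, Nat.even_iff]
      rcases hodd with ⟨k, hk⟩
      omega
    rcases Nat.even_or_odd j with he | ho
    · rw [if_neg (fun hcontra => (hpar.mp hcontra) he), if_pos he]
    · have hne : ¬ Even j := Nat.not_even_iff_odd.mpr ho
      rw [if_pos (hpar.mpr hne), if_neg hne, hcast]
      rw [Even.neg_pow ⟨n, by ring⟩]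
  have hEO : ∑ j ∈ Icc 1 (p-1), (if Even j then (-2 : ZMod p) * ((j : ℕ) : ZMod p)^(2*n) else 0)
      = ∑ j ∈ Icc 1 (p-1), (if Even j then 0 else (-2 : ZMod p) * ((j : ℕ) : ZMod p)^(2*n)) :=
    hpair.symm.trans (Finset.sum_congr rfl hodd_form)
  apply mul_left_cancel₀ h2z
  calc (2 : ZMod p) * ∑ j ∈ Icc 1 (p-1),
        (if Even j then (-2 : ZMod p) * ((j : ℕ) : ZMod p)^(2*n) else 0)
      = (∑ j ∈ Icc 1 (p-1), (if Even j then (-2 : ZMod p) * ((j : ℕ) : ZMod p)^(2*n) else 0))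
        + ∑ j ∈ Icc 1 (p-1), (if Even j then 0 else (-2 : ZMod p) * ((j : ℕ) : ZMod p)^(2*n)) := by
        rw [← hEO]; ring
    _ = ∑ j ∈ Icc 1 (p-1), (-2 : ZMod p) * ((j : ℕ) : ZMod p)^(2*n) := by
        rw [← Finset.sum_add_distrib]
        apply Finset.sum_congr rfl
        intro j hj
        split_ifs <;> ring
    _ = (-2 : ZMod p) * ∑ j ∈ Icc 1 (p-1), ((j : ℕ) : ZMod p)^(2*n) := by
        rw [Finset.mul_sum]
    _ = (-2 : ZMod p) * (if (p-1) ∣ 2*n then -1 else 0) := by rw [sum_Icc_pow]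
    _ = (2 : ZMod p) * (if (p-1) ∣ 2*n then 1 else 0) := by split_ifs <;> ring

end modp4

lemma even_extract {R : Type*} [CommRing R] (n : ℕ) (x : R) :
    2 * ∑ i ∈ range (n+1), ((2*n).choose (2*i) : R) * x^(2*i)
      = (1+x)^(2*n) + (1-x)^(2*n) := by
  have h1 : (1+x)^(2*n) = ∑ j ∈ range (2*n+1), x^j * ((2*n).choose j : R) := by
    rw [add_comm, add_pow]
    apply Finset.sum_congr rfl
    intro j hj
    rw [one_pow]
    ring
  have h2 : (1-x)^(2*n) = ∑ j ∈ range (2*n+1), (-x)^j * ((2*n).choose j : R) := by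
    rw [sub_eq_add_neg, add_comm, add_pow]
    apply Finset.sum_congr rfl
    intro j hj
    rw [one_pow]
    ring
  rw [h1, h2, ← Finset.sum_add_distrib]
  have hfil : ∑ j ∈ (range (2*n+1)).filter (fun j => Even j),
      (x^j * ((2*n).choose j : R) + (-x)^j * ((2*n).choose j : R))
      = ∑ j ∈ range (2*n+1), (x^j * ((2*n).choose j : R) + (-x)^j * ((2*n).choose j : R)) := by
    apply Finset.sum_filter_of_ne
    intro j hj hne
    by_contra hodd
    rw [Nat.not_even_iff_odd] at hodd
    rw [hodd.neg_pow] at hne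
    exact hne (by ring)
  rw [← hfil]
  have himg : (range (2*n+1)).filter (fun j => Even j) = (range (n+1)).image (fun i => 2*i) := by
    ext j
    simp only [Finset.mem_filter, Finset.mem_range, Finset.mem_image]
    constructor
    · rintro ⟨hlt, k, hk⟩
      exact ⟨k, by omega, by omega⟩
    · rintro ⟨i, hi, rfl⟩
      exact ⟨by omega, ⟨i, by omega⟩⟩
  rw [himg, Finset.sum_image (fun a _ b _ h => by omega)]
  rw [Finset.mul_sum]
  apply Finset.sum_congr rfl
  intro i hi
  rw [Even.neg_pow ⟨i, by ring⟩]
  ring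

section modp5
variable (p : ℕ) [Fact p.Prime]

lemma Tneg_mod (hodd : Odd p) (n : ℕ) :
    ((TnegNat n (p-1) : ℕ) : ZMod p) = if (2*n ≠ 0 ∧ (p-1) ∣ 2*n) then 2 else 1 := by
  have hp : p.Prime := Fact.out
  have hp2 := hp.two_le
  haveI : NeZero p := ⟨hp.ne_zero⟩
  have h2z : (2 : ZMod p) ≠ 0 := two_ne_zero_zmod p hodd
  have hc : ((TnegNat n (p-1) : ℕ) : ZMod p)
      = ∑ i ∈ range (n+1), (((2*n).choose (2*i) : ℕ) : ZMod p)
          * ((DnegNat i (p-1) : ℕ) : ZMod p) := by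
    rw [TnegNat]
    push_cast
    rfl
  rw [hc]
  rw [Finset.sum_congr rfl (fun i _ => by rw [Dneg_mod p hodd i])]
  have hdelta : ∀ i : ℕ, (if (p-1) ∣ 2*i then (1 : ZMod p) else 0)
      = -∑ a ∈ Icc 1 (p-1), ((a : ℕ) : ZMod p)^(2*i) := by
    intro i
    rw [sum_Icc_pow]
    split_ifs <;> ring
  rw [Finset.sum_congr rfl (fun i _ => by rw [hdelta i])]
  apply mul_left_cancel₀ h2z
  have step1 : (2 : ZMod p) * ∑ i ∈ range (n+1), (((2*n).choose (2*i) : ℕ) : ZMod p)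
        * (-∑ a ∈ Icc 1 (p-1), ((a : ℕ) : ZMod p)^(2*i))
      = -∑ a ∈ Icc 1 (p-1), ((1 + ((a : ℕ) : ZMod p))^(2*n) + (1 - ((a : ℕ) : ZMod p))^(2*n)) := by
    rw [Finset.mul_sum]
    rw [show ∑ i ∈ range (n+1), (2 : ZMod p) * ((((2*n).choose (2*i) : ℕ) : ZMod p)
          * (-∑ a ∈ Icc 1 (p-1), ((a : ℕ) : ZMod p)^(2*i)))
        = -∑ i ∈ range (n+1), ∑ a ∈ Icc 1 (p-1), (2 : ZMod p)
            * ((((2*n).choose (2*i) : ℕ) : ZMod p) * ((a : ℕ) : ZMod p)^(2*i)) from by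
      rw [← Finset.sum_neg_distrib]
      apply Finset.sum_congr rfl
      intro i _
      have hms : ∑ a ∈ Icc 1 (p-1), (2 : ZMod p)
            * ((((2*n).choose (2*i) : ℕ) : ZMod p) * ((a : ℕ) : ZMod p)^(2*i))
          = 2 * ((((2*n).choose (2*i) : ℕ) : ZMod p)
            * ∑ a ∈ Icc 1 (p-1), ((a : ℕ) : ZMod p)^(2*i)) := by
        rw [Finset.mul_sum, Finset.mul_sum]
      rw [hms]
      ring]
    rw [Finset.sum_comm]
    congr 1
    apply Finset.sum_congr rfl
    intro a _
    rw [← even_extract n (((a : ℕ) : ZMod p)), Finset.mul_sum]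
  rw [step1]
  have hIcc : ∀ g : ZMod p → ZMod p,
      ∑ a ∈ Icc 1 (p-1), g ((a : ℕ) : ZMod p) = (∑ x : ZMod p, g x) - g 0 := by
    intro g
    rw [sum_Icc_cast p g]
    have h0 : (0 : ZMod p) ∈ (univ : Finset (ZMod p)) := Finset.mem_univ 0
    rw [Finset.sum_eq_sum_sdiff_singleton_add h0 g]
    ring
  have hshift1 : ∑ x : ZMod p, (1 + x)^(2*n) = ∑ y : ZMod p, y^(2*n) := by
    apply Fintype.sum_equiv (Equiv.addLeft (1 : ZMod p))
    intro x
    rfl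
  have hshift2 : ∑ x : ZMod p, (1 - x)^(2*n) = ∑ y : ZMod p, y^(2*n) := by
    apply Fintype.sum_equiv (Equiv.subLeft (1 : ZMod p))
    intro x
    rfl
  have hsplitsum : ∑ a ∈ Icc 1 (p-1), ((1 + ((a : ℕ) : ZMod p))^(2*n) + (1 - ((a : ℕ) : ZMod p))^(2*n))
      = 2 * (∑ y : ZMod p, y^(2*n)) - 2 := by
    rw [Finset.sum_add_distrib, hIcc (fun x => (1+x)^(2*n)), hIcc (fun x => (1-x)^(2*n))]
    simp only [add_zero, sub_zero, one_pow]
    rw [hshift1, hshift2]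
    ring
  rw [hsplitsum]
  rcases Nat.eq_zero_or_pos n with hn0 | hnpos
  · subst hn0
    have : ∑ y : ZMod p, y^(2*0) = (p : ZMod p) := by
      simp only [Nat.mul_zero, pow_zero]
      rw [Finset.sum_const, Finset.card_univ, ZMod.card]
      simp
    rw [this, ZMod.natCast_self]
    simp
  · have h2n : 2*n ≠ 0 := by omega
    rw [sum_univ_pow p (2*n) h2n]
    by_cases hdvd : (p-1) ∣ 2*n
    · rw [if_pos hdvd, if_pos ⟨h2n, hdvd⟩]
      ring
    · rw [if_neg hdvd, if_neg (by tauto)]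
      ring

end modp5

lemma exists_int_of_cast_eq (p M r : ℕ) [NeZero p] (h : ((M : ℕ) : ZMod p) = ((r : ℕ) : ZMod p)) :
    ∃ c : ℤ, (M : ℚ) = (p : ℚ) * c + r := by
  have h0 : (((M : ℤ) - (r : ℤ) : ℤ) : ZMod p) = 0 := by
    push_cast
    rw [h]
    ring
  rw [ZMod.intCast_zmod_eq_zero_iff_dvd] at h0
  obtain ⟨c, hc⟩ := h0
  refine ⟨c, ?_⟩
  have hZ : (M : ℤ) = (p : ℤ) * c + r := by linarith [hc]
  exact_mod_cast congrArg (Int.cast : ℤ → ℚ) hZ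

theorem stmt15 (p n : ℕ) (hp : p.Prime) (hodd : Odd p) :
    ((2 * n = 0 ∨ ¬ (p - 1) ∣ 2 * n) → ∃ c : ℤ, Tneg n (p - 1) = (p : ℚ) * c + 1) ∧
    ((2 * n ≠ 0 ∧ (p - 1) ∣ 2 * n) → ∃ c : ℤ, Tneg n (p - 1) = (p : ℚ) * c + 2) := by
  haveI := Fact.mk hp
  haveI : NeZero p := ⟨hp.ne_zero⟩
  have hT := Tneg_mod p hodd n
  rw [Tneg_eq_cast]
  constructor
  · intro hcond
    have hcond' : ¬ (2*n ≠ 0 ∧ (p-1) ∣ 2*n) := by tauto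
    rw [if_neg hcond'] at hT
    have h1 : ((TnegNat n (p-1) : ℕ) : ZMod p) = ((1 : ℕ) : ZMod p) := by
      rw [hT, Nat.cast_one]
    obtain ⟨c, hc⟩ := exists_int_of_cast_eq p (TnegNat n (p-1)) 1 h1
    exact ⟨c, by rw [hc]; norm_num⟩
  · intro hcond
    rw [if_pos hcond] at hT
    have h1 : ((TnegNat n (p-1) : ℕ) : ZMod p) = ((2 : ℕ) : ZMod p) := by
      rw [hT, Nat.cast_two]
    obtain ⟨c, hc⟩ := exists_int_of_cast_eq p (TnegNat n (p-1)) 2 h1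
    exact ⟨c, by rw [hc]; norm_num⟩
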